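/- For every natural number n, the Hermite polynomial of degree n has exactly n distinct real roots; that is, there exist n pairwise distinct real numbers x_1 < x_2 < ⋯ < x_n such that the degree-n Hermite polynomial vanishes at each x_j. (This justifies the definition of the one-dimensional Gauss–Hermite grid of level i as the 2^i − 1 roots of the Hermite polynomial of degree 2^i − 1.) -/

import Mathlib

open Polynomial Filter Set Topology

namespace HermiteRoots

/-- The `n`-th derivative of the Gaussian, written explicitly. -/
noncomputable def F (n : ℕ) : ℝ → ℝ :=
  fun x => (-1 : ℝ) ^ n * aeval x (hermite n) * Real.exp (-(x ^ 2 / 2))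

lemma F_eq (n : ℕ) : F n = deriv^[n] (fun y => Real.exp (-(y ^ 2 / 2))) := by
  funext x
  rw [Polynomial.deriv_gaussian_eq_hermite_mul_gaussian]
  rfl

lemma deriv_F (n : ℕ) : deriv (F n) = F (n + 1) := by
  rw [F_eq, F_eq, Function.iterate_succ_apply']

lemma gauss_diff : Differentiable ℝ (fun x : ℝ => Real.exp (-(x ^ 2 / 2))) := by
  apply Differentiable.exp
  fun_prop

lemma F_diff (n : ℕ) : Differentiable ℝ (F n) := by
  exact ((differentiable_const _).mul (Polynomial.differentiable_aeval _)).mul gauss_diff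

lemma key_top (q : ℝ[X]) :
    Tendsto (fun x => q.eval x * Real.exp (-(x ^ 2 / 2))) atTop (𝓝 0) := by
  apply squeeze_zero_norm' (a := fun x => |q.eval x| / Real.exp x)
  · filter_upwards [eventually_ge_atTop (2 : ℝ)] with x hx
    rw [Real.norm_eq_abs, abs_mul, abs_of_pos (Real.exp_pos _)]
    have hrhs : |q.eval x| / Real.exp x = |q.eval x| * Real.exp (-x) := by
      rw [Real.exp_neg]; ring
    rw [hrhs]
    have h1 : Real.exp (-(x ^ 2 / 2)) ≤ Real.exp (-x) := by
      apply Real.exp_le_exp.2; nlinarith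
    exact mul_le_mul_of_nonneg_left h1 (abs_nonneg _)
  · have h := (Polynomial.tendsto_div_exp_atTop q).abs
    rw [abs_zero] at h
    convert h using 2 with x
    rw [abs_div, abs_of_pos (Real.exp_pos _)]

lemma key_bot (q : ℝ[X]) :
    Tendsto (fun x => q.eval x * Real.exp (-(x ^ 2 / 2))) atBot (𝓝 0) := by
  have h := (key_top (q.comp (-X))).comp tendsto_neg_atBot_atTop
  convert h using 2 with x
  simp [Function.comp, eval_comp, neg_sq]

lemma F_top (n : ℕ) : Tendsto (F n) atTop (𝓝 0) := by
  have h := key_top (C ((-1 : ℝ) ^ n) * (hermite n).map (algebraMap ℤ ℝ))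
  convert h using 2 with x
  simp [F, eval_map, aeval_def, algebraMap_int_eq, mul_assoc]

lemma F_bot (n : ℕ) : Tendsto (F n) atBot (𝓝 0) := by
  have h := key_bot (C ((-1 : ℝ) ^ n) * (hermite n).map (algebraMap ℤ ℝ))
  convert h using 2 with x
  simp [F, eval_map, aeval_def, algebraMap_int_eq, mul_assoc]

lemma F_roots_finite (n : ℕ) : {x : ℝ | F n x = 0}.Finite := by
  have hmap : ((hermite n).map (algebraMap ℤ ℝ)) ≠ 0 :=
    ((hermite_monic n).map _).ne_zero
  apply (Polynomial.finite_setOf_isRoot hmap).subset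
  intro x hx
  simp only [mem_setOf_eq, F] at hx ⊢
  rcases mul_eq_zero.1 hx with h | h
  · rcases mul_eq_zero.1 h with h' | h'
    · exact absurd h' (pow_ne_zero _ (by norm_num))
    · rwa [IsRoot, eval_map, ← aeval_def]
  · exact absurd h (Real.exp_ne_zero _)

lemma F_exists_gt (n : ℕ) (a : ℝ) : ∃ b > a, F n b ≠ 0 := by
  obtain ⟨b, hb⟩ := ((Set.Ioi_infinite a).diff (F_roots_finite n)).nonempty
  exact ⟨b, hb.1, hb.2⟩

lemma F_exists_lt (n : ℕ) (a : ℝ) : ∃ b < a, F n b ≠ 0 := by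
  obtain ⟨b, hb⟩ := ((Set.Iio_infinite a).diff (F_roots_finite n)).nonempty
  exact ⟨b, hb.1, hb.2⟩

/-- Half-line Rolle, positive case. -/
lemma rolle_right_pos {f : ℝ → ℝ} (hf : Differentiable ℝ f) {a b : ℝ} (hab : a < b)
    (ha : f a = 0) (hb : 0 < f b) (hlim : Tendsto f atTop (𝓝 0)) :
    ∃ c, a < c ∧ deriv f c = 0 := by
  have h1 : ∀ᶠ x in atTop, f x < f b := hlim.eventually (gt_mem_nhds hb)
  obtain ⟨B, hB1, hB2⟩ := (h1.and (eventually_ge_atTop (b + 1))).exists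
  have haB : a < B := by linarith
  obtain ⟨c, hcmem, hc⟩ := isCompact_Icc.exists_isMaxOn (nonempty_Icc.2 haB.le)
    hf.continuous.continuousOn
  have hbc : f b ≤ f c := hc ⟨hab.le, by linarith⟩
  have hca : a < c := by
    rcases hcmem.1.lt_or_eq with h | h
    · exact h
    · exfalso; rw [← h, ha] at hbc; linarith
  have hcB : c < B := by
    rcases hcmem.2.lt_or_eq with h | h
    · exact h
    · exfalso; rw [h] at hbc; linarith
  have hloc : IsLocalMax f c := hc.isLocalMax (Icc_mem_nhds hca hcB)
  exact ⟨c, hca, hloc.deriv_eq_zero⟩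

lemma rolle_right {f : ℝ → ℝ} (hf : Differentiable ℝ f) {a : ℝ}
    (ha : f a = 0) (hne : ∃ b > a, f b ≠ 0) (hlim : Tendsto f atTop (𝓝 0)) :
    ∃ c, a < c ∧ deriv f c = 0 := by
  obtain ⟨b, hb, hfb⟩ := hne
  rcases hfb.lt_or_gt with h | h
  · obtain ⟨c, hc1, hc2⟩ := rolle_right_pos hf.neg hb (by simp [ha]) (by simpa using h)
      (by rw [← neg_zero]; exact hlim.neg)
    refine ⟨c, hc1, ?_⟩
    have : deriv (-f) c = -deriv f c := deriv.neg
    rw [this] at hc2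
    linarith
  · exact rolle_right_pos hf hb ha h hlim

lemma rolle_left {f : ℝ → ℝ} (hf : Differentiable ℝ f) {a : ℝ}
    (ha : f a = 0) (hne : ∃ b < a, f b ≠ 0) (hlim : Tendsto f atBot (𝓝 0)) :
    ∃ c, c < a ∧ deriv f c = 0 := by
  obtain ⟨b, hb, hfb⟩ := hne
  have hderiv : ∀ x : ℝ, deriv (fun y => f (-y)) x = deriv f (-x) * (-1) := by
    intro x
    exact (((hf (-x)).hasDerivAt).comp x (hasDerivAt_neg x)).deriv
  have hgdiff : Differentiable ℝ (fun y => f (-y)) := hf.comp differentiable_neg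
  obtain ⟨c, hc1, hc2⟩ := rolle_right hgdiff (a := -a) (by simpa using ha)
    ⟨-b, by linarith, by simpa using hfb⟩ (hlim.comp tendsto_neg_atTop_atBot)
  refine ⟨-c, by linarith, ?_⟩
  rw [hderiv c] at hc2
  linarith [hc2]

lemma main (n : ℕ) : ∃ x : Fin n → ℝ, StrictMono x ∧ ∀ j, F n (x j) = 0 := by
  induction n with
  | zero => exact ⟨Fin.elim0, fun i => i.elim0, fun j => j.elim0⟩
  | succ n ih =>
    rcases n with _ | m
    · refine ⟨fun _ => 0, fun i j h => ?_, fun j => ?_⟩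
      · have hi := i.isLt; have hj := j.isLt; rw [Fin.lt_def] at h; omega
      · simp [F, hermite_one]
    · obtain ⟨x, hmono, hroot⟩ := ih
      have hdiff := F_diff (m+1)
      have hder := deriv_F (m+1)
      -- left tail root
      obtain ⟨c₀, hc₀lt, hc₀⟩ := rolle_left hdiff (hroot 0) (F_exists_lt (m+1) (x 0)) (F_bot (m+1))
      rw [hder] at hc₀
      -- interior and right-tail roots
      have hmid : ∀ j : Fin (m+1), ∃ c, x j < c ∧
          (∀ h : (j : ℕ) + 1 < (m+1), c < x ⟨(j : ℕ) + 1, h⟩) ∧ F ((m+1) + 1) c = 0 := by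
        intro j
        by_cases h : (j : ℕ) + 1 < (m+1)
        · have hlt : j < (⟨(j : ℕ) + 1, h⟩ : Fin (m+1)) := by
            simp [Fin.lt_def]
          obtain ⟨c, hcmem, hc⟩ := exists_deriv_eq_zero (hmono hlt)
            hdiff.continuous.continuousOn (by rw [hroot, hroot])
          rw [hder] at hc
          exact ⟨c, hcmem.1, fun h' => hcmem.2, hc⟩
        · obtain ⟨c, hlt, hc⟩ := rolle_right hdiff (hroot j) (F_exists_gt (m+1) (x j)) (F_top (m+1))
          rw [hder] at hc
          exact ⟨c, hlt, fun h' => absurd h' h, hc⟩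
      choose mid hmid1 hmid2 hmid3 using hmid
      refine ⟨Fin.cons c₀ mid, ?_, ?_⟩
      · rw [Fin.strictMono_iff_lt_succ]
        intro i
        induction i using Fin.cases with
        | zero =>
          rw [Fin.castSucc_zero, Fin.cons_zero, Fin.cons_succ]
          exact hc₀lt.trans (hmid1 0)
        | succ j =>
          rw [← Fin.succ_castSucc, Fin.cons_succ, Fin.cons_succ]
          have h1 : ((j.castSucc : Fin (m+1)) : ℕ) + 1 < (m+1) := by
            have := j.is_lt
            simp only [Fin.coe_castSucc]
            omega
          have h2 : (⟨((j.castSucc : Fin (m+1)) : ℕ) + 1, h1⟩ : Fin (m+1)) = j.succ := by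
            apply Fin.ext; simp
          calc mid j.castSucc < x ⟨((j.castSucc : Fin (m+1)) : ℕ) + 1, h1⟩ := hmid2 _ h1
            _ = x j.succ := by rw [h2]
            _ < mid j.succ := hmid1 _
      · intro k
        induction k using Fin.cases with
        | zero => rw [Fin.cons_zero]; exact hc₀
        | succ j => rw [Fin.cons_succ]; exact hmid3 j

end HermiteRoots

/-- The Hermite polynomial of degree `n` has exactly `n` distinct real roots:
there exist `n` strictly increasing real numbers at which it vanishes.
(This justifies defining the one-dimensional Gauss–Hermite grid of level `i`
as the `2^i − 1` roots of the Hermite polynomial of degree `2^i − 1`.) -/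
theorem hermite_has_n_distinct_real_roots (n : ℕ) :
    ∃ x : Fin n → ℝ, StrictMono x ∧
      ∀ j : Fin n, (Polynomial.aeval (x j)) (Polynomial.hermite n) = 0 := by
  obtain ⟨x, hmono, hroot⟩ := HermiteRoots.main n
  refine ⟨x, hmono, fun j => ?_⟩
  have h := hroot j
  simp only [HermiteRoots.F, mul_eq_zero] at h
  rcases h with (h | h) | h
  · exact absurd h (pow_ne_zero _ (by norm_num))
  · exact h
  · exact absurd h (Real.exp_ne_zero _)
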